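/- Suppose λ : [0,T] → [0,∞) is integrable, F̄, Ḡ : [0,∞) → [0,1] are nonincreasing with Ḡ and F̄ continuous, and ρ₀ ∈ [0,1]. Then the Volterra equation ρ(t) = ρ₀·Ḡ(t) + ∫₀ᵗ 𝟙{ρ(u)<1}·F̄(t−u)·λ(u) du has at most one continuous solution ρ : [0,T] → [0,1]. -/

import Mathlib

open MeasureTheory Set intervalIntegral

lemma interval_int_helper {g : ℝ → ℝ} {a c : ℝ} (hg : IntegrableOn g (Icc a c))
    {x y : ℝ} (hx : x ∈ Icc a c) (hy : y ∈ Icc a c) : IntervalIntegrable g volume x y :=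
  (hg.mono_set (uIcc_subset_Icc hx hy)).intervalIntegrable

lemma abel_lower (K g : ℝ → ℝ) (a b M : ℝ) (hab : a ≤ b)
    (hK_mono : MonotoneOn K (Icc a b)) (hK_cont : ContinuousOn K (Icc a b))
    (hg : IntegrableOn g (Icc a b))
    (hM : ∀ t ∈ Icc a b, (∫ u in a..t, g u) ≤ M) :
    K b * ((∫ u in a..b, g u) - M) + K a * M ≤ ∫ u in a..b, K u * g u := by
  have hM0 : 0 ≤ M := by simpa using hM a ⟨le_rfl, hab⟩
  rcases eq_or_lt_of_le hab with rfl | hab'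
  · simp only [intervalIntegral.integral_same]
    ring_nf
    exact le_rfl
  -- integrability facts
  have hKmeas : AEStronglyMeasurable K (volume.restrict (Icc a b)) :=
    hK_cont.aestronglyMeasurable measurableSet_Icc
  have hKbd : ∀ x ∈ Icc a b, |K x| ≤ |K a| + |K b| := by
    intro x hx
    have h1 : K a ≤ K x := hK_mono ⟨le_rfl, hab⟩ hx hx.1
    have h2 : K x ≤ K b := hK_mono hx ⟨hab, le_rfl⟩ hx.2
    have := neg_abs_le (K a); have := le_abs_self (K b)
    have := abs_nonneg (K a); have := abs_nonneg (K b)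
    rw [abs_le]; constructor <;> linarith
  have hKg : IntegrableOn (fun u => K u * g u) (Icc a b) := by
    apply Integrable.mono' (hg.abs.const_mul (|K a| + |K b|)) (hKmeas.mul hg.1)
    filter_upwards [ae_restrict_mem measurableSet_Icc] with x hx
    show |K x * g x| ≤ _
    rw [abs_mul]
    exact mul_le_mul_of_nonneg_right (hKbd x hx) (abs_nonneg _)
  have hgII : ∀ x ∈ Icc a b, ∀ y ∈ Icc a b, IntervalIntegrable g volume x y :=
    fun x hx y hy => interval_int_helper hg hx hy
  have hKgII : ∀ x ∈ Icc a b, ∀ y ∈ Icc a b, IntervalIntegrable (fun u => K u * g u) volume x y :=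
    fun x hx y hy => interval_int_helper hKg hx hy
  -- epsilon form
  have key : ∀ ε : ℝ, 0 < ε →
      K b * ((∫ u in a..b, g u) - M) + K a * M ≤ (∫ u in a..b, K u * g u) + ε := by
    intro ε hε
    set C : ℝ := ∫ u in a..b, |g u| with hC
    have hC0 : 0 ≤ C := intervalIntegral.integral_nonneg hab fun u _ => abs_nonneg _
    set ε₁ : ℝ := ε / (C + 1) with hε₁def
    have hε₁ : 0 < ε₁ := div_pos hε (by linarith)
    have huc : UniformContinuousOn K (Icc a b) :=
      isCompact_Icc.uniformContinuousOn_of_continuous hK_cont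
    rw [Metric.uniformContinuousOn_iff] at huc
    obtain ⟨δ, hδpos, hδ⟩ := huc ε₁ hε₁
    obtain ⟨n, hn⟩ := exists_nat_gt ((b - a) / δ)
    have hba : 0 < b - a := by linarith
    have hn0 : 0 < (n : ℝ) := lt_trans (div_pos hba hδpos) hn
    set Δ : ℝ := (b - a) / n with hΔdef
    have hΔpos : 0 < Δ := div_pos hba hn0
    have hΔδ : Δ < δ := by
      have h' : b - a < n * δ := (div_lt_iff₀ hδpos).mp hn
      rw [hΔdef, div_lt_iff₀ hn0]
      linarith
    set u : ℕ → ℝ := fun i => a + Δ * i with hu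
    have hu0 : u 0 = a := by simp [hu]
    have hun : u n = b := by
      simp only [hu, hΔdef]
      field_simp
      ring
    have humono : ∀ i j : ℕ, i ≤ j → u i ≤ u j := by
      intro i j hij
      simp only [hu]
      have : (i : ℝ) ≤ j := by exact_mod_cast hij
      nlinarith
    have humem : ∀ i, i ≤ n → u i ∈ Icc a b := by
      intro i hi
      constructor
      · rw [← hu0]; exact humono 0 i (Nat.zero_le i)
      · rw [← hun]; exact humono i n hi
    have hstep : ∀ i : ℕ, u (i + 1) - u i = Δ := by
      intro i
      simp only [hu]
      push_cast
      ring
    set w : ℝ → ℝ := fun t => ∫ x in a..t, g x with hwdef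
    -- per-piece estimate
    have hpiece : ∀ i, i < n →
        K (u i) * (w (u (i + 1)) - w (u i)) - ε₁ * ∫ x in u i..u (i + 1), |g x| ≤
          ∫ x in u i..u (i + 1), K x * g x := by
      intro i hi
      have hui : u i ∈ Icc a b := humem i (le_of_lt hi)
      have hui1 : u (i + 1) ∈ Icc a b := humem (i + 1) hi
      have hle : u i ≤ u (i + 1) := humono i (i + 1) (Nat.le_succ i)
      have h1 : w (u (i + 1)) - w (u i) = ∫ x in u i..u (i + 1), g x :=
        integral_interval_sub_left (hgII a ⟨le_rfl, hab⟩ _ hui1) (hgII a ⟨le_rfl, hab⟩ _ hui)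
      have hfun : (fun x => (K x - K (u i)) * g x) = fun x => K x * g x - K (u i) * g x := by
        funext x; ring
      have hsub : IntervalIntegrable (fun x => (K x - K (u i)) * g x) volume (u i) (u (i + 1)) := by
        rw [hfun]
        exact (hKgII _ hui _ hui1).sub ((hgII _ hui _ hui1).const_mul _)
      have h2 : (∫ x in u i..u (i + 1), K x * g x) - K (u i) * ∫ x in u i..u (i + 1), g x
          = ∫ x in u i..u (i + 1), (K x - K (u i)) * g x := by
        rw [← intervalIntegral.integral_const_mul,
          ← intervalIntegral.integral_sub (hKgII _ hui _ hui1) ((hgII _ hui _ hui1).const_mul _)]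
        congr 1; ext x; ring
      have h3 : |∫ x in u i..u (i + 1), (K x - K (u i)) * g x| ≤ ε₁ * ∫ x in u i..u (i+1), |g x| := by
        calc |∫ x in u i..u (i + 1), (K x - K (u i)) * g x|
            ≤ ∫ x in u i..u (i + 1), |(K x - K (u i)) * g x| :=
              intervalIntegral.abs_integral_le_integral_abs hle
          _ ≤ ∫ x in u i..u (i + 1), ε₁ * |g x| := by
              apply intervalIntegral.integral_mono_on hle
                hsub.abs ((hgII _ hui _ hui1).abs.const_mul ε₁)
              intro x hx
              rw [abs_mul]
              apply mul_le_mul_of_nonneg_right _ (abs_nonneg _)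
              have hxm : x ∈ Icc a b := ⟨le_trans hui.1 hx.1, le_trans hx.2 hui1.2⟩
              have hd : dist x (u i) < δ := by
                rw [Real.dist_eq, abs_of_nonneg (by linarith [hx.1])]
                calc x - u i ≤ u (i + 1) - u i := by linarith [hx.2]
                  _ = Δ := hstep i
                  _ < δ := hΔδ
              exact le_of_lt (by simpa [Real.dist_eq] using hδ x hxm (u i) hui hd)
          _ = ε₁ * ∫ x in u i..u (i+1), |g x| := intervalIntegral.integral_const_mul _ _
      have := neg_abs_le (∫ x in u i..u (i + 1), (K x - K (u i)) * g x)
      rw [h1]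
      linarith [h3, h2.ge, h2.le]
    -- Abel summation
    have hwM : ∀ i, i ≤ n → w (u i) ≤ M := fun i hi => hM _ (humem i hi)
    have habel : ∀ m : ℕ, m < n →
        K (u m) * (w (u (m + 1)) - M) + K a * M ≤
          ∑ i ∈ Finset.range (m + 1), K (u i) * (w (u (i + 1)) - w (u i)) := by
      intro m
      induction m with
      | zero =>
        intro _
        rw [Finset.sum_range_one, hu0]
        have hwa : w a = 0 := by simp [hwdef]
        rw [hwa]
        have : K a * (w (u 1) - M) + K a * M = K a * (w (u 1) - 0) := by ring
        rw [this]
      | succ k ih =>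
        intro hk
        have hk' : k < n := Nat.lt_of_succ_lt hk
        have h1 := ih hk'
        rw [Finset.sum_range_succ]
        have hmono' : K (u k) ≤ K (u (k + 1)) :=
          hK_mono (humem k hk'.le) (humem (k + 1) hk.le) (humono k (k + 1) (Nat.le_succ k))
        have hw1 : w (u (k + 1)) - M ≤ 0 := by linarith [hwM (k + 1) hk.le]
        have h2 : K (u (k + 1)) * (w (u (k + 1)) - M) ≤ K (u k) * (w (u (k + 1)) - M) :=
          mul_le_mul_of_nonpos_right hmono' hw1
        have expand : K (u (k + 1)) * (w (u (k + 1 + 1)) - M) =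
            K (u (k + 1)) * (w (u (k + 1)) - M) +
              K (u (k + 1)) * (w (u (k + 1 + 1)) - w (u (k + 1))) := by ring
        linarith
    obtain ⟨m, hm⟩ : ∃ m, n = m + 1 := by
      have : n ≠ 0 := by exact_mod_cast hn0.ne'
      exact ⟨n - 1, by omega⟩
    have hfin := habel m (by omega)
    have humb : u (m + 1) = b := by rw [← hm, hun]
    rw [humb] at hfin
    have hKm : K (u m) ≤ K b := by
      apply hK_mono (humem m (by omega)) ⟨hab, le_rfl⟩
      rw [← hun]; exact humono m n (by omega)
    have hwb : w b ≤ M := hM b ⟨hab, le_rfl⟩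
    have hKb : K b * (w b - M) ≤ K (u m) * (w b - M) :=
      mul_le_mul_of_nonpos_right hKm (by linarith)
    have hgabsII : ∀ k, k < n → IntervalIntegrable (fun x => |g x|) volume (u k) (u (k + 1)) :=
      fun k hk => interval_int_helper hg.abs (humem k hk.le) (humem (k + 1) hk)
    have hsum1 : ∑ i ∈ Finset.range n, ∫ x in u i..u (i + 1), K x * g x
        = ∫ x in a..b, K x * g x := by
      have := intervalIntegral.sum_integral_adjacent_intervals (μ := volume)
        (f := fun x => K x * g x) (a := u) (n := n)
        (fun k hk => hKgII _ (humem k hk.le) _ (humem (k + 1) hk))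
      rw [hu0, hun] at this; exact this
    have hsum2 : ∑ i ∈ Finset.range n, ∫ x in u i..u (i + 1), |g x| = C := by
      have := intervalIntegral.sum_integral_adjacent_intervals (μ := volume)
        (f := fun x => |g x|) (a := u) (n := n) hgabsII
      rw [hu0, hun] at this; exact this
    have hsump : ∑ i ∈ Finset.range n, K (u i) * (w (u (i + 1)) - w (u i)) ≤
        (∫ x in a..b, K x * g x) + ε₁ * C := by
      have h1 : ∑ i ∈ Finset.range n, K (u i) * (w (u (i + 1)) - w (u i)) ≤
          ∑ i ∈ Finset.range n,
            ((∫ x in u i..u (i + 1), K x * g x) + ε₁ * ∫ x in u i..u (i + 1), |g x|) := by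
        apply Finset.sum_le_sum
        intro i hi
        have := hpiece i (Finset.mem_range.mp hi)
        linarith
      rw [Finset.sum_add_distrib, ← Finset.mul_sum, hsum1, hsum2] at h1
      exact h1
    have hεC : ε₁ * C ≤ ε := by
      rw [hε₁def, div_mul_eq_mul_div, div_le_iff₀ (by linarith : (0:ℝ) < C + 1)]
      nlinarith
    have hrange : ∑ i ∈ Finset.range (m + 1), K (u i) * (w (u (i + 1)) - w (u i))
        = ∑ i ∈ Finset.range n, K (u i) * (w (u (i + 1)) - w (u i)) := by rw [hm]
    rw [hrange] at hfin
    have hwbg : w b = ∫ x in a..b, g x := rfl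
    calc K b * ((∫ x in a..b, g x) - M) + K a * M
        ≤ K (u m) * (w b - M) + K a * M := by rw [← hwbg]; linarith
      _ ≤ ∑ i ∈ Finset.range n, K (u i) * (w (u (i + 1)) - w (u i)) := hfin
      _ ≤ (∫ x in a..b, K x * g x) + ε₁ * C := hsump
      _ ≤ (∫ x in a..b, K x * g x) + ε := by linarith
  -- conclude from epsilon form
  by_contra hcon
  push_neg at hcon
  have := key ((K b * ((∫ u in a..b, g u) - M) + K a * M - ∫ u in a..b, K u * g u) / 2)
    (by linarith)
  linarith

lemma aux_nonpos (F g h : ℝ → ℝ) (a c : ℝ) (hac : a ≤ c)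
    (hF0 : 0 < F 0)
    (hF_mono : AntitoneOn F (Ici 0)) (hF_cont : ContinuousOn F (Ici 0))
    (hFc : ∀ x ∈ Icc (0:ℝ) (c - a), F 0 / 2 ≤ F x)
    (hg : IntegrableOn g (Icc a c))
    (hh : ∀ t ∈ Icc a c, h t = ∫ u in a..t, F (t - u) * g u)
    (hsign : ∀ u ∈ Icc a c, 0 < g u → h u < 0) :
    ∀ t ∈ Icc a c, (∫ u in a..t, g u) ≤ 0 := by
  set w : ℝ → ℝ := fun t => ∫ u in a..t, g u with hwdef
  have hwcont : ContinuousOn w (Icc a c) := by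
    have := intervalIntegral.continuousOn_primitive_interval (μ := volume) (f := g)
      (a := a) (b := c) (by rwa [uIcc_of_le hac])
    rwa [uIcc_of_le hac] at this
  obtain ⟨t₁, ht₁, hmax⟩ := isCompact_Icc.exists_isMaxOn ⟨a, le_rfl, hac⟩ hwcont
  have hmax' : ∀ y ∈ Icc a c, w y ≤ w t₁ := fun y hy => hmax hy
  set M := w t₁ with hMdef
  suffices hM0 : M ≤ 0 by intro t ht; exact le_trans (hmax' t ht) hM0
  by_contra hMpos
  push_neg at hMpos
  have hwa : w a = 0 := by simp [hwdef]
  set S : Set ℝ := Icc a t₁ ∩ w ⁻¹' (Iic (M - M / 4)) with hS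
  have hSne : S.Nonempty := ⟨a, ⟨le_rfl, ht₁.1⟩, by
    simp only [mem_preimage, mem_Iic, hwa]; linarith⟩
  have hSbdd : BddAbove S := ⟨t₁, fun x hx => hx.1.2⟩
  have hScl : IsClosed S :=
    (hwcont.mono (Icc_subset_Icc le_rfl ht₁.2)).preimage_isClosed_of_isClosed
      isClosed_Icc isClosed_Iic
  set r := sSup S with hrdef
  have hrS : r ∈ S := hScl.csSup_mem hSne hSbdd
  have hra : a ≤ r := hrS.1.1
  have hrmem : r ∈ Icc a c := ⟨hra, le_trans hrS.1.2 ht₁.2⟩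
  have hrt₁ : r < t₁ := by
    rcases lt_or_eq_of_le hrS.1.2 with h' | h'
    · exact h'
    · exfalso; have := hrS.2; rw [h'] at this
      simp only [mem_preimage, mem_Iic] at this; linarith
  have hgt : ∀ y ∈ Ioc r t₁, M - M / 4 < w y := by
    intro y hy
    by_contra hc; push_neg at hc
    have hyS : y ∈ S := ⟨⟨le_trans hra hy.1.le, hy.2⟩, hc⟩
    exact absurd (le_csSup hSbdd hyS) (not_le.mpr hy.1)
  have hwdiff : w t₁ - w r = ∫ u in r..t₁, g u :=
    integral_interval_sub_left (interval_int_helper hg ⟨le_rfl, hac⟩ ht₁)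
      (interval_int_helper hg ⟨le_rfl, hac⟩ hrmem)
  have hwr : w r ≤ M - M / 4 := hrS.2
  have hpos : 0 < ∫ u in r..t₁, g u := by rw [← hwdiff]; linarith
  obtain ⟨b, hb, hgb⟩ : ∃ b ∈ Ioc r t₁, 0 < g b := by
    by_contra hcon; push_neg at hcon
    have h0 : (∫ u in r..t₁, g u) ≤ 0 := by
      rw [intervalIntegral.integral_of_le hrt₁.le]
      exact setIntegral_nonpos measurableSet_Ioc fun x hx => hcon x hx
    linarith
  have hbIcc : b ∈ Icc a c := ⟨le_trans hra hb.1.le, le_trans hb.2 ht₁.2⟩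
  have hhb : h b < 0 := hsign b hbIcc hgb
  have hwb : M - M / 4 < w b := hgt b hb
  have hab' : a ≤ b := hbIcc.1
  have habel := abel_lower (fun u => F (b - u)) g a b M hab'
    (by
      intro x hx y hy hxy
      exact hF_mono (sub_nonneg.mpr hy.2 : b - y ∈ Ici (0:ℝ))
        (sub_nonneg.mpr hx.2 : b - x ∈ Ici (0:ℝ)) (by linarith))
    (hF_cont.comp ((continuous_const.sub continuous_id).continuousOn)
      (fun x hx => sub_nonneg.mpr hx.2))
    (hg.mono_set (Icc_subset_Icc le_rfl hbIcc.2))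
    (fun t ht => hmax' t ⟨ht.1, le_trans ht.2 hbIcc.2⟩)
  rw [sub_self, ← hh b hbIcc] at habel
  have h1 : F 0 * (-(M / 4)) ≤ F 0 * ((∫ u in a..b, g u) - M) := by
    apply mul_le_mul_of_nonneg_left _ hF0.le
    have : w b = ∫ u in a..b, g u := rfl
    linarith [this ▸ hwb]
  have h2 : F 0 / 2 * M ≤ F (b - a) * M :=
    mul_le_mul_of_nonneg_right
      (hFc (b - a) ⟨sub_nonneg.mpr hab', sub_le_sub_right hbIcc.2 a⟩) hMpos.le
  nlinarith [mul_pos hF0 hMpos]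
theorem stmt_18 (T : ℝ) (hT : 0 < T) (lam F G ρ1 ρ2 : ℝ → ℝ) (ρ0 : ℝ)
    (hρ0 : ρ0 ∈ Icc (0:ℝ) 1)
    (hlam_int : IntegrableOn lam (Icc 0 T))
    (hlam_nonneg : ∀ u ∈ Icc (0:ℝ) T, 0 ≤ lam u)
    (hF_mono : AntitoneOn F (Ici 0)) (hF_cont : ContinuousOn F (Ici 0))
    (hF_range : ∀ x ∈ Ici (0:ℝ), F x ∈ Icc (0:ℝ) 1)
    (hG_mono : AntitoneOn G (Ici 0)) (hG_cont : ContinuousOn G (Ici 0))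
    (hG_range : ∀ x ∈ Ici (0:ℝ), G x ∈ Icc (0:ℝ) 1)
    (hρ1_cont : ContinuousOn ρ1 (Icc 0 T))
    (hρ1_range : ∀ t ∈ Icc (0:ℝ) T, ρ1 t ∈ Icc (0:ℝ) 1)
    (hρ2_cont : ContinuousOn ρ2 (Icc 0 T))
    (hρ2_range : ∀ t ∈ Icc (0:ℝ) T, ρ2 t ∈ Icc (0:ℝ) 1)
    (heq1 : ∀ t ∈ Icc (0:ℝ) T,
      ρ1 t = ρ0 * G t + ∫ u in (0:ℝ)..t, (if ρ1 u < 1 then F (t - u) * lam u else 0))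
    (heq2 : ∀ t ∈ Icc (0:ℝ) T,
      ρ2 t = ρ0 * G t + ∫ u in (0:ℝ)..t, (if ρ2 u < 1 then F (t - u) * lam u else 0)) :
    ∀ t ∈ Icc (0:ℝ) T, ρ1 t = ρ2 t := by
  classical
  rcases le_or_gt (F 0) 0 with hF0 | hF0
  · -- degenerate case F ≡ 0 on [0,∞)
    intro t ht
    have hFz : ∀ (ρ : ℝ → ℝ), ∀ u ∈ uIcc (0:ℝ) t,
        (if ρ u < 1 then F (t - u) * lam u else 0) = (0:ℝ) := by
      intro ρ u hu
      rw [uIcc_of_le ht.1] at hu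
      have h0tu : (0:ℝ) ≤ t - u := sub_nonneg.mpr hu.2
      have h1 : F (t - u) ≤ F 0 :=
        hF_mono (mem_Ici.mpr le_rfl) (mem_Ici.mpr h0tu) h0tu
      have h2 : 0 ≤ F (t - u) := (hF_range _ (mem_Ici.mpr h0tu)).1
      have h3 : F (t - u) = 0 := le_antisymm (by linarith) h2
      rw [h3, zero_mul, ite_self]
    have e1 : (∫ u in (0:ℝ)..t, (if ρ1 u < 1 then F (t - u) * lam u else 0)) = 0 := by
      rw [intervalIntegral.integral_congr (g := fun _ => (0:ℝ)) (fun u hu => hFz ρ1 u hu)]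
      simp
    have e2 : (∫ u in (0:ℝ)..t, (if ρ2 u < 1 then F (t - u) * lam u else 0)) = 0 := by
      rw [intervalIntegral.integral_congr (g := fun _ => (0:ℝ)) (fun u hu => hFz ρ2 u hu)]
      simp
    rw [heq1 t ht, heq2 t ht, e1, e2]
  -- main case
  set g : ℝ → ℝ :=
    fun u => ((if ρ1 u < 1 then (1:ℝ) else 0) - (if ρ2 u < 1 then (1:ℝ) else 0)) * lam u
    with hgdef
  have hmeas : ∀ (ρ : ℝ → ℝ), ContinuousOn ρ (Icc 0 T) →
      AEStronglyMeasurable (fun u => if ρ u < 1 then (1:ℝ) else 0)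
        (volume.restrict (Icc 0 T)) := by
    intro ρ hcont
    have h1 : AEMeasurable ρ (volume.restrict (Icc 0 T)) :=
      hcont.aemeasurable measurableSet_Icc
    have h2 : Measurable fun x : ℝ => if x < 1 then (1:ℝ) else 0 :=
      Measurable.ite measurableSet_Iio measurable_const measurable_const
    exact (h2.comp_aemeasurable h1).aestronglyMeasurable
  have hg_meas : AEStronglyMeasurable g (volume.restrict (Icc 0 T)) :=
    ((hmeas ρ1 hρ1_cont).sub (hmeas ρ2 hρ2_cont)).mul hlam_int.1
  have hind_bd : ∀ u : ℝ, |(if ρ1 u < 1 then (1:ℝ) else 0) - (if ρ2 u < 1 then (1:ℝ) else 0)| ≤ 1 := by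
    intro u; split_ifs <;> norm_num
  have hg_bd : ∀ u : ℝ, |g u| ≤ |lam u| := by
    intro u
    rw [hgdef]
    simp only []
    rw [abs_mul]
    calc |(if ρ1 u < 1 then (1:ℝ) else 0) - (if ρ2 u < 1 then (1:ℝ) else 0)| * |lam u|
        ≤ 1 * |lam u| := mul_le_mul_of_nonneg_right (hind_bd u) (abs_nonneg _)
      _ = |lam u| := one_mul _
  have hg_int : IntegrableOn g (Icc 0 T) := by
    apply Integrable.mono' hlam_int.abs hg_meas
    exact ae_of_all _ fun x => by rw [Real.norm_eq_abs]; exact hg_bd x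
  have hsplit : ∀ t u : ℝ,
      (if ρ1 u < 1 then F (t - u) * lam u else 0) -
        (if ρ2 u < 1 then F (t - u) * lam u else 0) = F (t - u) * g u := by
    intro t u
    rw [hgdef]
    simp only []
    split_ifs <;> ring
  have hχ_int : ∀ (ρ : ℝ → ℝ), ContinuousOn ρ (Icc 0 T) → ∀ t ∈ Icc (0:ℝ) T,
      IntegrableOn (fun u => if ρ u < 1 then F (t - u) * lam u else 0) (Icc 0 t) := by
    intro ρ hcont t htm
    have hFcont : ContinuousOn (fun u => F (t - u)) (Icc 0 t) :=
      hF_cont.comp ((continuous_const.sub continuous_id).continuousOn)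
        (fun x hx => sub_nonneg.mpr hx.2)
    have hsub : Icc (0:ℝ) t ⊆ Icc 0 T := Icc_subset_Icc le_rfl htm.2
    have haesm : AEStronglyMeasurable
        (fun u => if ρ u < 1 then F (t - u) * lam u else 0) (volume.restrict (Icc 0 t)) := by
      have h1 := (hmeas ρ hcont).mono_measure (Measure.restrict_mono hsub le_rfl)
      have h2 : AEStronglyMeasurable (fun u => F (t - u)) (volume.restrict (Icc 0 t)) :=
        hFcont.aestronglyMeasurable measurableSet_Icc
      have h3 := hlam_int.1.mono_measure (Measure.restrict_mono hsub le_rfl)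
      apply (h1.mul (h2.mul h3)).congr
      apply ae_of_all
      intro x
      by_cases hx : ρ x < 1 <;> simp [hx]
    apply Integrable.mono' (((hlam_int.mono_set hsub).abs).const_mul (F 0)) haesm
    filter_upwards [ae_restrict_mem measurableSet_Icc] with x hx
    have h0tx : (0:ℝ) ≤ t - x := sub_nonneg.mpr hx.2
    have hF1 : F (t - x) ≤ F 0 := hF_mono (mem_Ici.mpr le_rfl) (mem_Ici.mpr h0tx) h0tx
    have hF2 : 0 ≤ F (t - x) := (hF_range _ (mem_Ici.mpr h0tx)).1
    by_cases hρx : ρ x < 1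
    · rw [if_pos hρx, Real.norm_eq_abs, abs_mul, abs_of_nonneg hF2]
      exact mul_le_mul hF1 (le_refl _) (abs_nonneg _) hF0.le
    · rw [if_neg hρx]
      simp only [norm_zero]
      positivity
  have hK_int : ∀ t ∈ Icc (0:ℝ) T, IntegrableOn (fun u => F (t - u) * g u) (Icc 0 t) := by
    intro t htm
    have hFcont : ContinuousOn (fun u => F (t - u)) (Icc 0 t) :=
      hF_cont.comp ((continuous_const.sub continuous_id).continuousOn)
        (fun x hx => sub_nonneg.mpr hx.2)
    have hsub : Icc (0:ℝ) t ⊆ Icc 0 T := Icc_subset_Icc le_rfl htm.2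
    have haesm : AEStronglyMeasurable (fun u => F (t - u) * g u) (volume.restrict (Icc 0 t)) :=
      (hFcont.aestronglyMeasurable measurableSet_Icc).mul
        (hg_meas.mono_measure (Measure.restrict_mono hsub le_rfl))
    apply Integrable.mono' (((hlam_int.mono_set hsub).abs).const_mul (F 0)) haesm
    filter_upwards [ae_restrict_mem measurableSet_Icc] with x hx
    have h0tx : (0:ℝ) ≤ t - x := sub_nonneg.mpr hx.2
    have hF1 : F (t - x) ≤ F 0 := hF_mono (mem_Ici.mpr le_rfl) (mem_Ici.mpr h0tx) h0tx
    have hF2 : 0 ≤ F (t - x) := (hF_range _ (mem_Ici.mpr h0tx)).1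
    rw [Real.norm_eq_abs, abs_mul, abs_of_nonneg hF2]
    calc F (t - x) * |g x| ≤ F 0 * |g x| :=
          mul_le_mul_of_nonneg_right hF1 (abs_nonneg _)
      _ ≤ F 0 * |lam x| := mul_le_mul_of_nonneg_left (hg_bd x) hF0.le
  have h00 : ρ1 0 = ρ2 0 := by
    have e1 := heq1 0 ⟨le_rfl, hT.le⟩
    have e2 := heq2 0 ⟨le_rfl, hT.le⟩
    rw [intervalIntegral.integral_same] at e1 e2
    rw [e1, e2]
  set Z : Set ℝ := {z | z ∈ Icc (0:ℝ) T ∧ ∀ s ∈ Icc (0:ℝ) z, ρ1 s = ρ2 s} with hZdef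
  have hZ0 : (0:ℝ) ∈ Z := ⟨⟨le_rfl, hT.le⟩, fun s hs => by
    have hs0 : s = 0 := le_antisymm hs.2 hs.1
    rw [hs0]; exact h00⟩
  have hZbdd : BddAbove Z := ⟨T, fun z hz => hz.1.2⟩
  set t0 := sSup Z with ht0def
  have ht0mem : t0 ∈ Icc (0:ℝ) T :=
    ⟨le_csSup hZbdd hZ0, csSup_le ⟨0, hZ0⟩ fun z hz => hz.1.2⟩
  have hZlt : ∀ s, 0 ≤ s → s < t0 → ρ1 s = ρ2 s := by
    intro s hs0 hst
    obtain ⟨z, hz, hsz⟩ := exists_lt_of_lt_csSup ⟨0, hZ0⟩ hst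
    exact hz.2 s ⟨hs0, hsz.le⟩
  have hZstar : ∀ s ∈ Icc (0:ℝ) t0, ρ1 s = ρ2 s := by
    intro s hs
    rcases lt_or_eq_of_le hs.2 with h' | h'
    · exact hZlt s hs.1 h'
    · rw [h']
      rcases eq_or_lt_of_le ht0mem.1 with h0 | h0
      · rw [← h0]; exact h00
      · have hne : (nhdsWithin t0 (Ico 0 t0)).NeBot := by
          apply mem_closure_iff_nhdsWithin_neBot.mp
          rw [closure_Ico h0.ne]
          exact ⟨h0.le, le_rfl⟩
        have h1 : Filter.Tendsto (fun x => ρ1 x - ρ2 x) (nhdsWithin t0 (Ico 0 t0))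
            (nhds (ρ1 t0 - ρ2 t0)) := by
          apply ((hρ1_cont.sub hρ2_cont) t0 ht0mem).mono_left
          apply nhdsWithin_mono
          intro x hx
          exact ⟨hx.1, le_trans hx.2.le ht0mem.2⟩
        have h2 : Filter.Tendsto (fun x => ρ1 x - ρ2 x) (nhdsWithin t0 (Ico 0 t0))
            (nhds 0) := by
          apply Filter.Tendsto.congr' _ tendsto_const_nhds
          filter_upwards [self_mem_nhdsWithin] with x hx
          rw [hZlt x hx.1 hx.2]; ring
        have := tendsto_nhds_unique h1 h2
        linarith
  have ht0T : t0 = T := by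
    by_contra hneq
    have ht0lt : t0 < T := lt_of_le_of_ne ht0mem.2 hneq
    have hcw : ContinuousWithinAt F (Ici 0) 0 := hF_cont 0 (mem_Ici.mpr le_rfl)
    rw [Metric.continuousWithinAt_iff] at hcw
    obtain ⟨δ, hδpos, hδ⟩ := hcw (F 0 / 2) (by linarith)
    set d := min (δ / 2) (T - t0) with hddef
    have hdpos : 0 < d := lt_min (by linarith) (by linarith)
    set c := t0 + d with hcdef
    have hct : c ≤ T := by
      have := min_le_right (δ / 2) (T - t0)
      rw [hcdef]; rw [hddef]; linarith
    have ht0c : t0 < c := by rw [hcdef]; linarith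
    have hFc : ∀ x ∈ Icc (0:ℝ) (c - t0), F 0 / 2 ≤ F x := by
      intro x hx
      have hcd : c - t0 = d := by rw [hcdef]; ring
      have hxd : x ≤ d := by rw [← hcd]; exact hx.2
      have hxδ : dist x 0 < δ := by
        rw [Real.dist_eq, sub_zero, abs_of_nonneg hx.1]
        have := min_le_left (δ / 2) (T - t0)
        rw [hddef] at hxd
        linarith
      have hd' := hδ (mem_Ici.mpr hx.1) hxδ
      rw [Real.dist_eq] at hd'
      have := abs_lt.mp hd'
      linarith [this.1]
    have hIccsub : Icc t0 c ⊆ Icc (0:ℝ) T :=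
      fun x hx => ⟨le_trans ht0mem.1 hx.1, le_trans hx.2 hct⟩
    have hg_int' : IntegrableOn g (Icc t0 c) := hg_int.mono_set hIccsub
    have hhform : ∀ t ∈ Icc t0 c, ρ1 t - ρ2 t = ∫ u in t0..t, F (t - u) * g u := by
      intro t htm
      have htT : t ∈ Icc (0:ℝ) T := hIccsub htm
      have hI1 : IntervalIntegrable (fun u => if ρ1 u < 1 then F (t - u) * lam u else 0)
          volume 0 t := by
        apply IntegrableOn.intervalIntegrable
        rw [uIcc_of_le htT.1]
        exact hχ_int ρ1 hρ1_cont t htT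
      have hI2 : IntervalIntegrable (fun u => if ρ2 u < 1 then F (t - u) * lam u else 0)
          volume 0 t := by
        apply IntegrableOn.intervalIntegrable
        rw [uIcc_of_le htT.1]
        exact hχ_int ρ2 hρ2_cont t htT
      have hsub : ρ1 t - ρ2 t = ∫ u in (0:ℝ)..t,
          ((if ρ1 u < 1 then F (t - u) * lam u else 0) -
            (if ρ2 u < 1 then F (t - u) * lam u else 0)) := by
        rw [intervalIntegral.integral_sub hI1 hI2]
        rw [heq1 t htT, heq2 t htT]; ring
      rw [hsub]
      have hcongr : EqOn
          (fun u => (if ρ1 u < 1 then F (t - u) * lam u else 0) -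
            (if ρ2 u < 1 then F (t - u) * lam u else 0))
          (fun u => F (t - u) * g u) (uIcc 0 t) := fun u _ => hsplit t u
      rw [intervalIntegral.integral_congr hcongr]
      have ht0t : t0 ≤ t := htm.1
      have hKint1 : IntervalIntegrable (fun u => F (t - u) * g u) volume 0 t0 := by
        apply IntegrableOn.intervalIntegrable
        rw [uIcc_of_le ht0mem.1]
        exact (hK_int t htT).mono_set (Icc_subset_Icc le_rfl ht0t)
      have hKint2 : IntervalIntegrable (fun u => F (t - u) * g u) volume t0 t := by
        apply IntegrableOn.intervalIntegrable
        rw [uIcc_of_le ht0t]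
        exact (hK_int t htT).mono_set (Icc_subset_Icc ht0mem.1 le_rfl)
      rw [← intervalIntegral.integral_add_adjacent_intervals hKint1 hKint2]
      have hzero : EqOn (fun u => F (t - u) * g u) (fun _ => (0:ℝ)) (uIcc 0 t0) := by
        intro u hu
        rw [uIcc_of_le ht0mem.1] at hu
        have hgu : g u = 0 := by
          rw [hgdef]
          simp only []
          rw [hZstar u hu]
          ring
        show F (t - u) * g u = 0
        rw [hgu, mul_zero]
      rw [intervalIntegral.integral_congr hzero, intervalIntegral.integral_zero, zero_add]
    have hsign1 : ∀ u ∈ Icc t0 c, 0 < g u → ρ1 u - ρ2 u < 0 := by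
      intro u hu hgu
      have huT : u ∈ Icc (0:ℝ) T := hIccsub hu
      have hlam := hlam_nonneg u huT
      have hval : g u = ((if ρ1 u < 1 then (1:ℝ) else 0) -
          (if ρ2 u < 1 then (1:ℝ) else 0)) * lam u := rfl
      by_cases h1 : ρ1 u < 1 <;> by_cases h2 : ρ2 u < 1
      · rw [hval, if_pos h1, if_pos h2] at hgu; norm_num at hgu
      · push_neg at h2; linarith
      · rw [hval, if_neg h1, if_pos h2] at hgu
        have : (0 - (1:ℝ)) * lam u ≤ 0 := by nlinarith
        linarith
      · rw [hval, if_neg h1, if_neg h2] at hgu; norm_num at hgu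
    have hsign2 : ∀ u ∈ Icc t0 c, 0 < -g u → ρ2 u - ρ1 u < 0 := by
      intro u hu hgu
      have huT : u ∈ Icc (0:ℝ) T := hIccsub hu
      have hlam := hlam_nonneg u huT
      have hval : g u = ((if ρ1 u < 1 then (1:ℝ) else 0) -
          (if ρ2 u < 1 then (1:ℝ) else 0)) * lam u := rfl
      by_cases h1 : ρ1 u < 1 <;> by_cases h2 : ρ2 u < 1
      · rw [hval, if_pos h1, if_pos h2] at hgu; norm_num at hgu
      · rw [hval, if_pos h1, if_neg h2] at hgu
        have : 0 ≤ (1 - (0:ℝ)) * lam u := by nlinarith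
        linarith
      · push_neg at h1; linarith
      · rw [hval, if_neg h1, if_neg h2] at hgu; norm_num at hgu
    have hle := aux_nonpos F g (fun x => ρ1 x - ρ2 x) t0 c ht0c.le hF0 hF_mono hF_cont
      hFc hg_int' hhform hsign1
    have hhform2 : ∀ t ∈ Icc t0 c, ρ2 t - ρ1 t = ∫ u in t0..t, F (t - u) * (-g u) := by
      intro t htm
      have e : (∫ u in t0..t, F (t - u) * (-g u)) = -∫ u in t0..t, F (t - u) * g u := by
        simp only [mul_neg]
        rw [intervalIntegral.integral_neg]
      rw [e, ← hhform t htm]; ring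
    have hge := aux_nonpos F (fun u => -g u) (fun x => ρ2 x - ρ1 x) t0 c ht0c.le hF0
      hF_mono hF_cont hFc hg_int'.neg hhform2 hsign2
    have hw0 : ∀ t ∈ Icc t0 c, (∫ u in t0..t, g u) = 0 := by
      intro t htm
      have h1 := hle t htm
      have h2 := hge t htm
      rw [intervalIntegral.integral_neg] at h2
      linarith
    have heqc : ∀ t ∈ Icc t0 c, ρ1 t = ρ2 t := by
      intro t htm
      have htT : t ∈ Icc (0:ℝ) T := hIccsub htm
      have hmono : MonotoneOn (fun u => F (t - u)) (Icc t0 t) := by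
        intro x hx y hy hxy
        exact hF_mono (sub_nonneg.mpr hy.2 : t - y ∈ Ici (0:ℝ))
          (sub_nonneg.mpr hx.2 : t - x ∈ Ici (0:ℝ)) (by linarith)
      have hcont : ContinuousOn (fun u => F (t - u)) (Icc t0 t) :=
        hF_cont.comp ((continuous_const.sub continuous_id).continuousOn)
          (fun x hx => sub_nonneg.mpr hx.2)
      have hgt2 : IntegrableOn g (Icc t0 t) := hg_int'.mono_set (Icc_subset_Icc le_rfl htm.2)
      have hM1 : ∀ s ∈ Icc t0 t, (∫ u in t0..s, g u) ≤ 0 :=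
        fun s hs => (hw0 s ⟨hs.1, le_trans hs.2 htm.2⟩).le
      have ha1 := abel_lower (fun u => F (t - u)) g t0 t 0 htm.1 hmono hcont hgt2 hM1
      rw [hw0 t htm, ← hhform t htm] at ha1
      have hM2 : ∀ s ∈ Icc t0 t, (∫ u in t0..s, (fun u => -g u) u) ≤ 0 := by
        intro s hs
        simp only []
        rw [intervalIntegral.integral_neg, hw0 s ⟨hs.1, le_trans hs.2 htm.2⟩]
        norm_num
      have ha2 := abel_lower (fun u => F (t - u)) (fun u => -g u) t0 t 0 htm.1 hmono hcont
        hgt2.neg hM2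
      have e2 : (∫ u in t0..t, -g u) = 0 := by
        rw [intervalIntegral.integral_neg, hw0 t htm]; norm_num
      rw [e2] at ha2
      have e3 : (∫ u in t0..t, F (t - u) * -g u) = ρ2 t - ρ1 t := by
        rw [← hhform2 t htm]
      rw [e3] at ha2
      nlinarith [ha1, ha2]
    have hcZ : c ∈ Z := by
      refine ⟨⟨le_trans ht0mem.1 ht0c.le, hct⟩, fun s hs => ?_⟩
      rcases le_or_gt s t0 with h' | h'
      · exact hZstar s ⟨hs.1, h'⟩
      · exact heqc s ⟨h'.le, hs.2⟩
    have := le_csSup hZbdd hcZ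
    linarith
  intro t ht
  exact hZstar t (by rw [ht0T]; exact ht)
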